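/- (Product theorem for Legendre–Toeplitz matrices, as recovered from Theorem 1.2 of the paper.) For all continuous functions f, g : [−1,1] → ℝ, one has lim_{k→∞} (1/k) Tr[ |T_k{f}·T_k{g} − T_k{f·g}| ] = 0, where f·g denotes the pointwise product and |A| := (AA^*)^{1/2}. -/

import Mathlib

open MeasureTheory Filter

/-- The `k × k` matrix `T_k{f}` with entries `∫_{-1}^{1} f(x) L_p(x) L_q(x) dx`, where
`L` is a family of polynomials (to be taken as the orthonormal Legendre polynomials). -/
noncomputable def legendreToeplitz (L : ℕ → Polynomial ℝ) (f : ℝ → ℝ) (k : ℕ) :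
    Matrix (Fin k) (Fin k) ℝ :=
  Matrix.of fun p q => ∫ x in (-1:ℝ)..1, f x * (L p).eval x * (L q).eval x

/-- `Tr[|A|]` where `|A| = (A Aᴴ)^{1/2}` is the absolute value of the real matrix `A`. -/
noncomputable def traceAbsReal {k : ℕ} (A : Matrix (Fin k) (Fin k) ℝ) : ℝ :=
  ((Matrix.posSemidef_self_mul_conjTranspose A).1.eigenvectorUnitary.1 *
    Matrix.diagonal ((RCLike.ofReal : ℝ → ℝ) ∘ Real.sqrt ∘ (Matrix.posSemidef_self_mul_conjTranspose A).1.eigenvalues) *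
    (star (Matrix.posSemidef_self_mul_conjTranspose A).1.eigenvectorUnitary : Matrix (Fin k) (Fin k) ℝ)).trace

namespace LTProd

open Polynomial intervalIntegral

lemma intble {h : ℝ → ℝ} (hh : ContinuousOn h (Set.Icc (-1:ℝ) 1)) :
    IntervalIntegrable h volume (-1 : ℝ) 1 := by
  apply ContinuousOn.intervalIntegrable
  rwa [Set.uIcc_of_le (by norm_num : (-1:ℝ) ≤ 1)]

lemma intbleC {h : ℝ → ℝ} (hh : Continuous h) :
    IntervalIntegrable h volume (-1 : ℝ) 1 := hh.intervalIntegrable _ _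

lemma icongr {f g : ℝ → ℝ} (h : ∀ x, f x = g x) :
    (∫ x in (-1:ℝ)..1, f x) = ∫ x in (-1:ℝ)..1, g x :=
  intervalIntegral.integral_congr fun x _ => h x

lemma intble_sum {ι} (s : Finset ι) {f : ι → ℝ → ℝ}
    (h : ∀ i ∈ s, IntervalIntegrable (f i) volume (-1:ℝ) 1) :
    IntervalIntegrable (fun x => ∑ i ∈ s, f i x) volume (-1:ℝ) 1 := by
  have e : (fun x => ∑ i ∈ s, f i x) = ∑ i ∈ s, f i := by funext x; simp
  rw [e]; exact IntervalIntegrable.sum s h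

lemma contPP (a : ℝ) (P Q : Polynomial ℝ) :
    Continuous fun x : ℝ => a * (P.eval x * Q.eval x) :=
  continuous_const.mul (P.continuous.mul Q.continuous)

variable (L : ℕ → Polynomial ℝ)

lemma sumL_sq
    (hL_orth : ∀ n m, (∫ x in (-1:ℝ)..1, (L n).eval x * (L m).eval x)
      = if n = m then 1 else 0) (s : Finset ℕ) (c : ℕ → ℝ) :
    (∫ x in (-1:ℝ)..1, (∑ p ∈ s, c p * (L p).eval x)^2) = ∑ p ∈ s, (c p)^2 := by
  have expand : ∀ x : ℝ, (∑ p ∈ s, c p * (L p).eval x)^2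
      = ∑ p ∈ s, ∑ q ∈ s, (c p * c q) * ((L p).eval x * (L q).eval x) := by
    intro x
    rw [sq, Finset.sum_mul_sum]
    exact Finset.sum_congr rfl fun p _ => Finset.sum_congr rfl fun q _ => by ring
  rw [icongr expand]
  rw [intervalIntegral.integral_finset_sum
    (fun p _ => intble_sum s (fun q _ => intbleC (contPP _ _ _)))]
  have step : ∀ p ∈ s, (∫ x in (-1:ℝ)..1,
      ∑ q ∈ s, (c p * c q) * ((L p).eval x * (L q).eval x)) = (c p)^2 := by
    intro p hp
    rw [intervalIntegral.integral_finset_sum (fun q _ => intbleC (contPP _ _ _))]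
    have term : ∀ q ∈ s, (∫ x in (-1:ℝ)..1, (c p * c q) * ((L p).eval x * (L q).eval x))
        = if p = q then c p * c q else 0 := by
      intro q _
      rw [intervalIntegral.integral_const_mul, hL_orth]
      split <;> ring
    rw [Finset.sum_congr rfl term, Finset.sum_ite_eq, if_pos hp, sq]
  exact Finset.sum_congr rfl step

lemma bessel
    (hL_orth : ∀ n m, (∫ x in (-1:ℝ)..1, (L n).eval x * (L m).eval x)
      = if n = m then 1 else 0)
    {h : ℝ → ℝ} (hh : ContinuousOn h (Set.Icc (-1:ℝ) 1)) (s : Finset ℕ) :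
    ∑ p ∈ s, (∫ x in (-1:ℝ)..1, h x * (L p).eval x)^2
      ≤ ∫ x in (-1:ℝ)..1, (h x)^2 := by
  set c : ℕ → ℝ := fun p => ∫ x in (-1:ℝ)..1, h x * (L p).eval x with hc
  set S : ℝ → ℝ := fun x => ∑ p ∈ s, c p * (L p).eval x with hSdef
  have hScont : Continuous S := by
    apply continuous_finset_sum
    intro p _
    exact continuous_const.mul (L p).continuous
  have ihs : (∫ x in (-1:ℝ)..1, h x * S x) = ∑ p ∈ s, (c p)^2 := by
    have e : ∀ x, h x * S x = ∑ p ∈ s, c p * (h x * (L p).eval x) := by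
      intro x
      rw [hSdef, Finset.mul_sum]
      exact Finset.sum_congr rfl fun p _ => by ring
    rw [icongr e, intervalIntegral.integral_finset_sum
      (f := fun p x => c p * (h x * (L p).eval x)) (fun p _ =>
      (intble (hh.mul (L p).continuous.continuousOn)).const_mul _)]
    exact Finset.sum_congr rfl fun p _ => by
      rw [intervalIntegral.integral_const_mul, pow_two]
  have iss : (∫ x in (-1:ℝ)..1, (S x)^2) = ∑ p ∈ s, (c p)^2 :=
    sumL_sq L hL_orth s c
  have key : (0:ℝ) ≤ ∫ x in (-1:ℝ)..1, (h x - S x)^2 :=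
    intervalIntegral.integral_nonneg (by norm_num) (fun u _ => sq_nonneg _)
  have expand : (∫ x in (-1:ℝ)..1, (h x - S x)^2)
      = (∫ x in (-1:ℝ)..1, (h x)^2) - 2*(∫ x in (-1:ℝ)..1, h x * S x)
        + (∫ x in (-1:ℝ)..1, (S x)^2) := by
    have e : ∀ x, (h x - S x)^2 = ((h x)^2 - 2*(h x * S x)) + (S x)^2 := fun x => by ring
    rw [icongr e, intervalIntegral.integral_add, intervalIntegral.integral_sub,
      intervalIntegral.integral_const_mul]
    · exact intble (hh.pow 2)
    · exact (intble (hh.mul hScont.continuousOn)).const_mul 2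
    · exact (intble (hh.pow 2)).sub ((intble (hh.mul hScont.continuousOn)).const_mul 2)
    · exact intbleC (hScont.pow 2)
  rw [ihs, iss] at expand
  linarith


lemma int_sq_le {h w : ℝ → ℝ} (hh : ContinuousOn h (Set.Icc (-1:ℝ) 1))
    (hw : Continuous w) {M : ℝ}
    (hM : ∀ x ∈ Set.Icc (-1:ℝ) 1, |h x| ≤ M) :
    (∫ x in (-1:ℝ)..1, (h x * w x)^2) ≤ M^2 * ∫ x in (-1:ℝ)..1, (w x)^2 := by
  rw [← intervalIntegral.integral_const_mul]
  apply intervalIntegral.integral_mono_on (by norm_num)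
    (intble ((hh.mul hw.continuousOn).pow 2))
    (intbleC (continuous_const.mul (hw.pow 2)))
  intro x hx
  have h1 : (h x)^2 ≤ M^2 := by
    rw [← sq_abs]
    exact pow_le_pow_left₀ (abs_nonneg _) (hM x hx) 2
  calc (h x * w x)^2 = (h x)^2 * (w x)^2 := by ring
    _ ≤ M^2 * (w x)^2 := mul_le_mul_of_nonneg_right h1 (sq_nonneg _)

section Frob

attribute [local instance] Matrix.frobeniusSeminormedAddCommGroup

lemma frob_eq {m n : Type*} [Fintype m] [Fintype n] (A : Matrix m n ℝ) :
    ‖A‖ = Real.sqrt (∑ i, ∑ j, (A i j)^2) := by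
  rw [Matrix.frobenius_norm_def, Real.sqrt_eq_rpow]
  congr 1
  refine Finset.sum_congr rfl fun i _ => Finset.sum_congr rfl fun j _ => ?_
  rw [show ((2:ℝ)) = ((2:ℕ):ℝ) by norm_num, Real.rpow_natCast, Real.norm_eq_abs, sq_abs]

lemma frob_le_of_sq_le {m n : Type*} [Fintype m] [Fintype n]
    (A : Matrix m n ℝ) {c : ℝ} (hc : (∑ i, ∑ j, (A i j)^2) ≤ c) :
    ‖A‖ ≤ Real.sqrt c := by
  rw [frob_eq]
  exact Real.sqrt_le_sqrt hc

end Frob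

section TraceAbs

attribute [local instance] Matrix.frobeniusSeminormedAddCommGroup

lemma psd_diag_nonneg {k : ℕ} {S : Matrix (Fin k) (Fin k) ℝ} (hS : S.PosSemidef)
    (i : Fin k) : 0 ≤ S i i := by
  exact hS.diag_nonneg

lemma traceAbs_eq {k : ℕ} (A : Matrix (Fin k) (Fin k) ℝ) : traceAbsReal A
    = ∑ i, Real.sqrt ((Matrix.posSemidef_self_mul_conjTranspose A).1.eigenvalues i) := by
  unfold traceAbsReal
  rw [Matrix.trace_mul_cycle, Unitary.star_mul_self_of_mem
    (Matrix.posSemidef_self_mul_conjTranspose A).1.eigenvectorUnitary.2, one_mul,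
    Matrix.trace_diagonal]
  rfl

lemma traceAbs_nonneg {k : ℕ} (A : Matrix (Fin k) (Fin k) ℝ) : 0 ≤ traceAbsReal A := by
  rw [traceAbs_eq]
  exact Finset.sum_nonneg fun i _ => Real.sqrt_nonneg _

lemma traceAbs_le {k : ℕ} (A : Matrix (Fin k) (Fin k) ℝ) :
    traceAbsReal A ≤ Real.sqrt k * ‖A‖ := by
  set hH := Matrix.posSemidef_self_mul_conjTranspose A with hHdef
  have hsum : (∑ i, hH.1.eigenvalues i) = ∑ i, ∑ j, (A i j)^2 := by
    have h := hH.1.trace_eq_sum_eigenvalues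
    simp only [RCLike.ofReal_real_eq_id, id] at h
    rw [← h, Matrix.trace]
    refine Finset.sum_congr rfl fun i _ => ?_
    rw [Matrix.diag_apply, Matrix.mul_apply]
    exact Finset.sum_congr rfl fun j _ => by
      rw [Matrix.conjTranspose_apply, star_trivial, pow_two]
  have c1 : (∑ i, Real.sqrt (hH.1.eigenvalues i))^2
      ≤ (k:ℝ) * ∑ i, (Real.sqrt (hH.1.eigenvalues i))^2 := by
    simpa using sq_sum_le_card_mul_sum_sq (s := (Finset.univ : Finset (Fin k)))
      (f := fun i => Real.sqrt (hH.1.eigenvalues i))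
  have c2 : (∑ i, (Real.sqrt (hH.1.eigenvalues i))^2) = ∑ i, hH.1.eigenvalues i :=
    Finset.sum_congr rfl fun i _ => Real.sq_sqrt (hH.eigenvalues_nonneg i)
  have key : (∑ i, Real.sqrt (hH.1.eigenvalues i))^2 ≤ (k:ℝ) * ‖A‖^2 := by
    have hA2 : ‖A‖^2 = ∑ i, ∑ j, (A i j)^2 := by
      rw [frob_eq]
      rw [Real.sq_sqrt]
      exact Finset.sum_nonneg fun i _ => Finset.sum_nonneg fun j _ => sq_nonneg _
    rw [hA2, ← hsum, ← c2]
    exact c1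
  rw [traceAbs_eq]
  calc (∑ i, Real.sqrt (hH.1.eigenvalues i)) ≤ |∑ i, Real.sqrt (hH.1.eigenvalues i)| :=
        le_abs_self _
    _ = Real.sqrt ((∑ i, Real.sqrt (hH.1.eigenvalues i))^2) := (Real.sqrt_sq_eq_abs _).symm
    _ ≤ Real.sqrt ((k:ℝ) * ‖A‖^2) := Real.sqrt_le_sqrt key
    _ = Real.sqrt k * ‖A‖ := by
        rw [Real.sqrt_mul (by positivity), Real.sqrt_sq (norm_nonneg _)]

end TraceAbs

section TMatrix

attribute [local instance] Matrix.frobeniusSeminormedAddCommGroup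

variable {L : ℕ → Polynomial ℝ}

lemma coT {h : ℝ → ℝ} (hh : ContinuousOn h (Set.Icc (-1:ℝ) 1)) (P Q : Polynomial ℝ) :
    ContinuousOn (fun x => h x * P.eval x * Q.eval x) (Set.Icc (-1:ℝ) 1) :=
  (hh.mul P.continuous.continuousOn).mul Q.continuous.continuousOn

lemma T_entry (h : ℝ → ℝ) (k : ℕ) (p q : Fin k) :
    legendreToeplitz L h k p q = ∫ x in (-1:ℝ)..1, h x * (L p).eval x * (L q).eval x := rfl

lemma T_sub {h₁ h₂ : ℝ → ℝ} (hh₁ : ContinuousOn h₁ (Set.Icc (-1:ℝ) 1))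
    (hh₂ : ContinuousOn h₂ (Set.Icc (-1:ℝ) 1)) (k : ℕ) :
    legendreToeplitz L (fun x => h₁ x - h₂ x) k
      = legendreToeplitz L h₁ k - legendreToeplitz L h₂ k := by
  ext p q
  rw [Matrix.sub_apply, T_entry, T_entry, T_entry,
    ← intervalIntegral.integral_sub (intble (coT hh₁ _ _)) (intble (coT hh₂ _ _))]
  exact icongr fun x => by ring

lemma frob_T
    (hL_orth : ∀ n m, (∫ x in (-1:ℝ)..1, (L n).eval x * (L m).eval x)
      = if n = m then 1 else 0)
    {h : ℝ → ℝ} (hh : ContinuousOn h (Set.Icc (-1:ℝ) 1)) {M : ℝ} (hM0 : 0 ≤ M)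
    (hM : ∀ x ∈ Set.Icc (-1:ℝ) 1, |h x| ≤ M) (k : ℕ) :
    ‖legendreToeplitz L h k‖ ≤ Real.sqrt k * M := by
  have row : ∀ p : Fin k, (∑ q : Fin k, (legendreToeplitz L h k p q)^2) ≤ M^2 := by
    intro p
    have e : (∑ q : Fin k, (legendreToeplitz L h k p q)^2)
        = ∑ q ∈ Finset.range k,
            (∫ x in (-1:ℝ)..1, (h x * (L p).eval x) * (L q).eval x)^2 :=
      Fin.sum_univ_eq_sum_range
        (fun q => (∫ x in (-1:ℝ)..1, (h x * (L (p:ℕ)).eval x) * (L q).eval x)^2) k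
    rw [e]
    calc ∑ q ∈ Finset.range k,
          (∫ x in (-1:ℝ)..1, (h x * (L (p:ℕ)).eval x) * (L q).eval x)^2
        ≤ ∫ x in (-1:ℝ)..1, (h x * (L (p:ℕ)).eval x)^2 :=
          bessel L hL_orth (hh.mul (L (p:ℕ)).continuous.continuousOn) (Finset.range k)
      _ ≤ M^2 * ∫ x in (-1:ℝ)..1, ((L (p:ℕ)).eval x)^2 :=
          int_sq_le hh (L (p:ℕ)).continuous hM
      _ = M^2 := by
          rw [icongr (fun x => pow_two ((L (p:ℕ)).eval x)), hL_orth, if_pos rfl, mul_one]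
  have key : (∑ p : Fin k, ∑ q : Fin k, (legendreToeplitz L h k p q)^2)
      ≤ (k:ℝ) * M^2 := by
    calc (∑ p : Fin k, ∑ q : Fin k, (legendreToeplitz L h k p q)^2)
        ≤ ∑ _p : Fin k, M^2 := Finset.sum_le_sum fun p _ => row p
      _ = (k:ℝ) * M^2 := by simp [mul_comm]
  calc ‖legendreToeplitz L h k‖ ≤ Real.sqrt ((k:ℝ) * M^2) := frob_le_of_sq_le _ key
    _ = Real.sqrt k * M := by
        rw [Real.sqrt_mul (by positivity), Real.sqrt_sq hM0]

lemma frob_mul_left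
    (hL_orth : ∀ n m, (∫ x in (-1:ℝ)..1, (L n).eval x * (L m).eval x)
      = if n = m then 1 else 0)
    {h : ℝ → ℝ} (hh : ContinuousOn h (Set.Icc (-1:ℝ) 1)) {M : ℝ} (hM0 : 0 ≤ M)
    (hM : ∀ x ∈ Set.Icc (-1:ℝ) 1, |h x| ≤ M) {k : ℕ} (B : Matrix (Fin k) (Fin k) ℝ) :
    ‖legendreToeplitz L h k * B‖ ≤ M * ‖B‖ := by
  classical
  have col : ∀ q : Fin k, (∑ p : Fin k, ((legendreToeplitz L h k * B) p q)^2)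
      ≤ M^2 * ∑ r : Fin k, (B r q)^2 := by
    intro q
    set c : ℕ → ℝ := fun n => if hn : n < k then B ⟨n, hn⟩ q else 0 with hcdef
    have hc : ∀ i : Fin k, c (i:ℕ) = B i q := by
      intro i
      simp [hcdef, i.isLt]
    set P : ℝ → ℝ := fun x => ∑ r ∈ Finset.range k, c r * (L r).eval x with hPdef
    have hPcont : Continuous P := by
      apply continuous_finset_sum
      exact fun r _ => continuous_const.mul (L r).continuous
    have entry : ∀ p : Fin k, (legendreToeplitz L h k * B) p q
        = ∫ x in (-1:ℝ)..1, (h x * P x) * (L (p:ℕ)).eval x := by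
      intro p
      rw [Matrix.mul_apply]
      have e1 : ∀ r : Fin k, legendreToeplitz L h k p r * B r q
          = (∫ x in (-1:ℝ)..1, (h x * (L (p:ℕ)).eval x * (L (r:ℕ)).eval x) * c (r:ℕ)) := by
        intro r
        rw [T_entry, hc, intervalIntegral.integral_mul_const]
      rw [Finset.sum_congr rfl fun r _ => e1 r]
      rw [Fin.sum_univ_eq_sum_range
        (fun n => ∫ x in (-1:ℝ)..1, (h x * (L (p:ℕ)).eval x * (L n).eval x) * c n) k]
      rw [← intervalIntegral.integral_finset_sum
        (fun n _ => (intble (coT hh _ _)).mul_const _)]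
      apply icongr
      intro x
      rw [hPdef]
      simp only [Finset.mul_sum, Finset.sum_mul]
      exact Finset.sum_congr rfl fun i _ => by ring
    have sump : (∑ p : Fin k, ((legendreToeplitz L h k * B) p q)^2)
        = ∑ p ∈ Finset.range k,
            (∫ x in (-1:ℝ)..1, (h x * P x) * (L p).eval x)^2 := by
      rw [Finset.sum_congr rfl fun p _ => congrArg (· ^ 2) (entry p)]
      exact Fin.sum_univ_eq_sum_range
        (fun n => (∫ x in (-1:ℝ)..1, (h x * P x) * (L n).eval x)^2) k
    have hiP : (∫ x in (-1:ℝ)..1, (P x)^2) = ∑ r : Fin k, (B r q)^2 := by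
      rw [hPdef, sumL_sq L hL_orth (Finset.range k) c]
      rw [← Fin.sum_univ_eq_sum_range (fun n => (c n)^2) k]
      exact Finset.sum_congr rfl fun r _ => by rw [hc]
    calc (∑ p : Fin k, ((legendreToeplitz L h k * B) p q)^2)
        = ∑ p ∈ Finset.range k,
            (∫ x in (-1:ℝ)..1, (h x * P x) * (L p).eval x)^2 := sump
      _ ≤ ∫ x in (-1:ℝ)..1, (h x * P x)^2 :=
          bessel L hL_orth (hh.mul hPcont.continuousOn) (Finset.range k)
      _ ≤ M^2 * ∫ x in (-1:ℝ)..1, (P x)^2 := int_sq_le hh hPcont hM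
      _ = M^2 * ∑ r : Fin k, (B r q)^2 := by rw [hiP]
  have key : (∑ p : Fin k, ∑ q : Fin k, ((legendreToeplitz L h k * B) p q)^2)
      ≤ M^2 * ‖B‖^2 := by
    rw [Finset.sum_comm]
    have hB2 : ‖B‖^2 = ∑ r : Fin k, ∑ q : Fin k, (B r q)^2 := by
      rw [frob_eq, Real.sq_sqrt]
      exact Finset.sum_nonneg fun i _ => Finset.sum_nonneg fun j _ => sq_nonneg _
    calc (∑ q : Fin k, ∑ p : Fin k, ((legendreToeplitz L h k * B) p q)^2)
        ≤ ∑ q : Fin k, M^2 * ∑ r : Fin k, (B r q)^2 :=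
          Finset.sum_le_sum fun q _ => col q
      _ = M^2 * ∑ q : Fin k, ∑ r : Fin k, (B r q)^2 := by rw [Finset.mul_sum]
      _ = M^2 * ‖B‖^2 := by rw [hB2, Finset.sum_comm]
  calc ‖legendreToeplitz L h k * B‖ ≤ Real.sqrt (M^2 * ‖B‖^2) := frob_le_of_sq_le _ key
    _ = M * ‖B‖ := by rw [← mul_pow, Real.sqrt_sq (by positivity)]

end TMatrix

section PolySpan

variable {L : ℕ → Polynomial ℝ}

lemma L_ne_zero
    (hL_orth : ∀ n m, (∫ x in (-1:ℝ)..1, (L n).eval x * (L m).eval x)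
      = if n = m then 1 else 0) (n : ℕ) : L n ≠ 0 := by
  intro h0
  have h1 := hL_orth n n
  rw [if_pos rfl, h0] at h1
  simp at h1

lemma mem_span (hL_deg : ∀ n, (L n).natDegree = n)
    (hL_orth : ∀ n m, (∫ x in (-1:ℝ)..1, (L n).eval x * (L m).eval x)
      = if n = m then 1 else 0) :
    ∀ (n : ℕ) (P : Polynomial ℝ), P.natDegree ≤ n → ∀ N, n < N →
      ∃ c : ℕ → ℝ, P = ∑ r ∈ Finset.range N, Polynomial.C (c r) * L r := by
  intro n
  induction n using Nat.strong_induction_on with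
  | _ n ih =>
  intro P hPn N hN
  by_cases h0 : P = 0
  · exact ⟨fun _ => 0, by simp [h0]⟩
  have hdN : P.natDegree < N := lt_of_le_of_lt hPn hN
  have hLd0 : L P.natDegree ≠ 0 := L_ne_zero hL_orth P.natDegree
  have hlc : (L P.natDegree).leadingCoeff ≠ 0 := Polynomial.leadingCoeff_ne_zero.mpr hLd0
  set α : ℝ := P.leadingCoeff / (L P.natDegree).leadingCoeff with hα
  have hα0 : α ≠ 0 := div_ne_zero (Polynomial.leadingCoeff_ne_zero.mpr h0) hlc
  have hdeg : P.degree = (Polynomial.C α * L P.natDegree).degree := by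
    rw [Polynomial.degree_C_mul hα0, Polynomial.degree_eq_natDegree h0,
      Polynomial.degree_eq_natDegree hLd0, hL_deg]
  have hlc2 : P.leadingCoeff = (Polynomial.C α * L P.natDegree).leadingCoeff := by
    rw [Polynomial.leadingCoeff_mul, Polynomial.leadingCoeff_C, hα]
    field_simp
  set Q := P - Polynomial.C α * L P.natDegree with hQ
  have repQ : ∃ c : ℕ → ℝ, Q = ∑ r ∈ Finset.range N, Polynomial.C (c r) * L r := by
    by_cases hQ0 : Q = 0
    · exact ⟨fun _ => 0, by simp [hQ0]⟩
    have hdQ : Q.degree < P.degree := Polynomial.degree_sub_lt hdeg h0 hlc2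
    have hQn : Q.natDegree < P.natDegree := Polynomial.natDegree_lt_natDegree hQ0 hdQ
    exact ih Q.natDegree (lt_of_lt_of_le hQn hPn) Q le_rfl N
      (lt_trans (lt_of_lt_of_le hQn hPn) hN)
  obtain ⟨c, hcQ⟩ := repQ
  refine ⟨fun r => c r + if r = P.natDegree then α else 0, ?_⟩
  have hPQ : P = Q + Polynomial.C α * L P.natDegree := by rw [hQ]; ring
  have term : ∀ r ∈ Finset.range N,
      Polynomial.C (c r + if r = P.natDegree then α else 0) * L r
        = Polynomial.C (c r) * L r
          + (if r = P.natDegree then Polynomial.C α * L r else 0) := by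
    intro r _
    split
    · rw [Polynomial.C_add]; ring
    · rw [add_zero, add_zero]
  rw [Finset.sum_congr rfl term, Finset.sum_add_distrib,
    Finset.sum_ite_eq' (Finset.range N) P.natDegree
      (fun r => Polynomial.C α * L r),
    if_pos (Finset.mem_range.mpr hdN), ← hcQ, ← hPQ]

lemma integral_expand (hL_deg : ∀ n, (L n).natDegree = n)
    (hL_orth : ∀ n m, (∫ x in (-1:ℝ)..1, (L n).eval x * (L m).eval x)
      = if n = m then 1 else 0)
    {w : ℝ → ℝ} (hw : ContinuousOn w (Set.Icc (-1:ℝ) 1)) (P : Polynomial ℝ)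
    {N : ℕ} (hPN : P.natDegree < N) :
    (∫ x in (-1:ℝ)..1, w x * P.eval x)
      = ∑ r ∈ Finset.range N,
          (∫ x in (-1:ℝ)..1, P.eval x * (L r).eval x)
            * (∫ x in (-1:ℝ)..1, w x * (L r).eval x) := by
  obtain ⟨c, hc⟩ := mem_span hL_deg hL_orth P.natDegree P le_rfl N hPN
  have hev : ∀ x : ℝ, P.eval x = ∑ r ∈ Finset.range N, c r * (L r).eval x := by
    intro x
    rw [hc]
    rw [Polynomial.eval_finset_sum]
    exact Finset.sum_congr rfl fun r _ => by rw [Polynomial.eval_mul, Polynomial.eval_C]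
  have coeff : ∀ r ∈ Finset.range N,
      (∫ x in (-1:ℝ)..1, P.eval x * (L r).eval x) = c r := by
    intro r hr
    have e : ∀ x : ℝ, P.eval x * (L r).eval x
        = ∑ sIdx ∈ Finset.range N, c sIdx * ((L sIdx).eval x * (L r).eval x) := by
      intro x
      rw [hev x, Finset.sum_mul]
      exact Finset.sum_congr rfl fun sIdx _ => by ring
    rw [icongr e, intervalIntegral.integral_finset_sum
      (f := fun sIdx x => c sIdx * ((L sIdx).eval x * (L r).eval x)) (fun sIdx _ =>
      (intbleC ((L sIdx).continuous.mul (L r).continuous)).const_mul _)]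
    have e2 : ∀ sIdx ∈ Finset.range N,
        (∫ x in (-1:ℝ)..1, c sIdx * ((L sIdx).eval x * (L r).eval x))
          = if sIdx = r then c sIdx else 0 := by
      intro sIdx _
      rw [intervalIntegral.integral_const_mul, hL_orth]
      split <;> simp
    rw [Finset.sum_congr rfl e2, Finset.sum_ite_eq' (Finset.range N) r c, if_pos hr]
  have main : (∫ x in (-1:ℝ)..1, w x * P.eval x)
      = ∑ r ∈ Finset.range N, c r * (∫ x in (-1:ℝ)..1, w x * (L r).eval x) := by
    have e : ∀ x : ℝ, w x * P.eval x
        = ∑ r ∈ Finset.range N, c r * (w x * (L r).eval x) := by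
      intro x
      rw [hev x, Finset.mul_sum]
      exact Finset.sum_congr rfl fun r _ => by ring
    rw [icongr e, intervalIntegral.integral_finset_sum
      (f := fun r x => c r * (w x * (L r).eval x)) (fun r _ =>
      (intble (hw.mul (L r).continuous.continuousOn)).const_mul _)]
    exact Finset.sum_congr rfl fun r _ => by
      rw [intervalIntegral.integral_const_mul]
  rw [main]
  exact Finset.sum_congr rfl fun r hr => by rw [coeff r hr]

end PolySpan

section PolyCase

attribute [local instance] Matrix.frobeniusSeminormedAddCommGroup

variable {L : ℕ → Polynomial ℝ}

lemma poly_case (hL_deg : ∀ n, (L n).natDegree = n)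
    (hL_orth : ∀ n m, (∫ x in (-1:ℝ)..1, (L n).eval x * (L m).eval x)
      = if n = m then 1 else 0)
    (Pf Pg : Polynomial ℝ) {Mf Mg : ℝ} (hMf0 : 0 ≤ Mf) (hMg0 : 0 ≤ Mg)
    (hMf : ∀ x ∈ Set.Icc (-1:ℝ) 1, |Pf.eval x| ≤ Mf)
    (hMg : ∀ x ∈ Set.Icc (-1:ℝ) 1, |Pg.eval x| ≤ Mg) (k : ℕ) :
    ‖legendreToeplitz L (fun x => Pf.eval x) k
        * legendreToeplitz L (fun x => Pg.eval x) k
      - legendreToeplitz L (fun x => Pf.eval x * Pg.eval x) k‖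
      ≤ (Pg.natDegree : ℝ) * Mf * Mg := by
  classical
  set d := Pg.natDegree with hd
  set D := legendreToeplitz L (fun x => Pf.eval x) k
        * legendreToeplitz L (fun x => Pg.eval x) k
      - legendreToeplitz L (fun x => Pf.eval x * Pg.eval x) k with hD
  set a : Fin k → ℕ → ℝ := fun p r =>
    ∫ x in (-1:ℝ)..1, (Pf.eval x * (L r).eval x) * (L (p:ℕ)).eval x with ha
  set b : ℕ → Fin k → ℝ := fun r q =>
    ∫ x in (-1:ℝ)..1, (Pg.eval x * (L r).eval x) * (L (q:ℕ)).eval x with hb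
  have entry : ∀ p q : Fin k,
      D p q = - ∑ r ∈ Finset.Ico k (k + d), a p r * b r q := by
    intro p q
    have prodE : (legendreToeplitz L (fun x => Pf.eval x) k
        * legendreToeplitz L (fun x => Pg.eval x) k) p q
        = ∑ r ∈ Finset.range k, a p r * b r q := by
      rw [Matrix.mul_apply]
      have e1 : ∀ r : Fin k,
          legendreToeplitz L (fun x => Pf.eval x) k p r
            * legendreToeplitz L (fun x => Pg.eval x) k r q
          = a p (r:ℕ) * b (r:ℕ) q := by
        intro r
        rw [T_entry, T_entry, ha, hb]
        have : (∫ x in (-1:ℝ)..1, Pf.eval x * (L (p:ℕ)).eval x * (L (r:ℕ)).eval x)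
            = ∫ x in (-1:ℝ)..1, (Pf.eval x * (L (r:ℕ)).eval x) * (L (p:ℕ)).eval x :=
          icongr fun x => by ring
        rw [this]
      rw [Finset.sum_congr rfl fun r _ => e1 r]
      exact Fin.sum_univ_eq_sum_range (fun n => a p n * b n q) k
    have fullE : legendreToeplitz L (fun x => Pf.eval x * Pg.eval x) k p q
        = ∑ r ∈ Finset.range (k + d), a p r * b r q := by
      have hdegP : (Pg * L (q:ℕ)).natDegree < k + d := by
        calc (Pg * L (q:ℕ)).natDegree ≤ Pg.natDegree + (L (q:ℕ)).natDegree :=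
            Polynomial.natDegree_mul_le
          _ = d + (q:ℕ) := by rw [hL_deg, hd]
          _ < k + d := by omega
      have expand := integral_expand hL_deg hL_orth
        (w := fun x => Pf.eval x * (L (p:ℕ)).eval x)
        ((Pf.continuous.continuousOn).mul (L (p:ℕ)).continuous.continuousOn)
        (Pg * L (q:ℕ)) hdegP
      have lhsE : legendreToeplitz L (fun x => Pf.eval x * Pg.eval x) k p q
          = ∫ x in (-1:ℝ)..1,
              (Pf.eval x * (L (p:ℕ)).eval x) * (Pg * L (q:ℕ)).eval x := by
        rw [T_entry]
        exact icongr fun x => by rw [Polynomial.eval_mul]; ring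
      rw [lhsE, expand]
      refine Finset.sum_congr rfl fun r _ => ?_
      have eb : (∫ x in (-1:ℝ)..1, (Pg * L (q:ℕ)).eval x * (L r).eval x) = b r q := by
        rw [hb]
        exact icongr fun x => by rw [Polynomial.eval_mul]; ring
      rw [eb, mul_comm]
      congr 1
      rw [ha]
      exact icongr fun x => by ring
    rw [hD, Matrix.sub_apply, prodE, fullE,
      Finset.sum_Ico_eq_sub (fun n => a p n * b n q) (Nat.le_add_right k d)]
    ring
  have rowA : ∀ r : ℕ, (∑ p : Fin k, (a p r)^2) ≤ Mf^2 := by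
    intro r
    have e : (∑ p : Fin k, (a p r)^2)
        = ∑ n ∈ Finset.range k,
            (∫ x in (-1:ℝ)..1, (Pf.eval x * (L r).eval x) * (L n).eval x)^2 :=
      Fin.sum_univ_eq_sum_range
        (fun n => (∫ x in (-1:ℝ)..1, (Pf.eval x * (L r).eval x) * (L n).eval x)^2) k
    rw [e]
    calc (∑ n ∈ Finset.range k,
          (∫ x in (-1:ℝ)..1, (Pf.eval x * (L r).eval x) * (L n).eval x)^2)
        ≤ ∫ x in (-1:ℝ)..1, (Pf.eval x * (L r).eval x)^2 :=
          bessel L hL_orth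
            (Pf.continuous.continuousOn.mul (L r).continuous.continuousOn)
            (Finset.range k)
      _ ≤ Mf^2 * ∫ x in (-1:ℝ)..1, ((L r).eval x)^2 :=
          int_sq_le Pf.continuous.continuousOn (L r).continuous hMf
      _ = Mf^2 := by
          rw [icongr (fun x => pow_two ((L r).eval x)), hL_orth, if_pos rfl, mul_one]
  have rowB : ∀ r : ℕ, (∑ q : Fin k, (b r q)^2) ≤ Mg^2 := by
    intro r
    have e : (∑ q : Fin k, (b r q)^2)
        = ∑ n ∈ Finset.range k,
            (∫ x in (-1:ℝ)..1, (Pg.eval x * (L r).eval x) * (L n).eval x)^2 :=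
      Fin.sum_univ_eq_sum_range
        (fun n => (∫ x in (-1:ℝ)..1, (Pg.eval x * (L r).eval x) * (L n).eval x)^2) k
    rw [e]
    calc (∑ n ∈ Finset.range k,
          (∫ x in (-1:ℝ)..1, (Pg.eval x * (L r).eval x) * (L n).eval x)^2)
        ≤ ∫ x in (-1:ℝ)..1, (Pg.eval x * (L r).eval x)^2 :=
          bessel L hL_orth
            (Pg.continuous.continuousOn.mul (L r).continuous.continuousOn)
            (Finset.range k)
      _ ≤ Mg^2 * ∫ x in (-1:ℝ)..1, ((L r).eval x)^2 :=
          int_sq_le Pg.continuous.continuousOn (L r).continuous hMg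
      _ = Mg^2 := by
          rw [icongr (fun x => pow_two ((L r).eval x)), hL_orth, if_pos rfl, mul_one]
  have sumA : (∑ p : Fin k, ∑ r ∈ Finset.Ico k (k + d), (a p r)^2)
      ≤ (d:ℝ) * Mf^2 := by
    rw [Finset.sum_comm]
    calc (∑ r ∈ Finset.Ico k (k + d), ∑ p : Fin k, (a p r)^2)
        ≤ ∑ _r ∈ Finset.Ico k (k + d), Mf^2 :=
          Finset.sum_le_sum fun r _ => rowA r
      _ = (d:ℝ) * Mf^2 := by
          rw [Finset.sum_const, Nat.card_Ico]
          simp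
  have sumB : (∑ q : Fin k, ∑ r ∈ Finset.Ico k (k + d), (b r q)^2)
      ≤ (d:ℝ) * Mg^2 := by
    rw [Finset.sum_comm]
    calc (∑ r ∈ Finset.Ico k (k + d), ∑ q : Fin k, (b r q)^2)
        ≤ ∑ _r ∈ Finset.Ico k (k + d), Mg^2 :=
          Finset.sum_le_sum fun r _ => rowB r
      _ = (d:ℝ) * Mg^2 := by
          rw [Finset.sum_const, Nat.card_Ico]
          simp
  have key : (∑ p : Fin k, ∑ q : Fin k, (D p q)^2) ≤ ((d:ℝ) * Mf * Mg)^2 := by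
    have step1 : ∀ p q : Fin k, (D p q)^2
        ≤ (∑ r ∈ Finset.Ico k (k + d), (a p r)^2)
            * (∑ r ∈ Finset.Ico k (k + d), (b r q)^2) := by
      intro p q
      rw [entry p q, neg_sq]
      exact Finset.sum_mul_sq_le_sq_mul_sq _ _ _
    calc (∑ p : Fin k, ∑ q : Fin k, (D p q)^2)
        ≤ ∑ p : Fin k, ∑ q : Fin k,
            (∑ r ∈ Finset.Ico k (k + d), (a p r)^2)
              * (∑ r ∈ Finset.Ico k (k + d), (b r q)^2) :=
          Finset.sum_le_sum fun p _ => Finset.sum_le_sum fun q _ => step1 p q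
      _ = (∑ p : Fin k, ∑ r ∈ Finset.Ico k (k + d), (a p r)^2)
            * (∑ q : Fin k, ∑ r ∈ Finset.Ico k (k + d), (b r q)^2) := by
          rw [Finset.sum_mul_sum]
      _ ≤ ((d:ℝ) * Mf^2) * ((d:ℝ) * Mg^2) := by
          apply mul_le_mul sumA sumB
          · exact Finset.sum_nonneg fun q _ =>
              Finset.sum_nonneg fun r _ => sq_nonneg _
          · positivity
      _ = ((d:ℝ) * Mf * Mg)^2 := by ring
  calc ‖D‖ ≤ Real.sqrt (((d:ℝ) * Mf * Mg)^2) := frob_le_of_sq_le _ key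
    _ = (d:ℝ) * Mf * Mg := Real.sqrt_sq (by positivity)

end PolyCase

section Final

attribute [local instance] Matrix.frobeniusSeminormedAddCommGroup

theorem final
    (L : ℕ → Polynomial ℝ)
    (hL_deg : ∀ n, (L n).natDegree = n)
    (hL_orth : ∀ n m, (∫ x in (-1:ℝ)..1, (L n).eval x * (L m).eval x)
      = if n = m then 1 else 0)
    (f g : ℝ → ℝ)
    (hf : ContinuousOn f (Set.Icc (-1) 1)) (hg : ContinuousOn g (Set.Icc (-1) 1)) :
    Tendsto (fun k : ℕ =>
        traceAbsReal (legendreToeplitz L f k * legendreToeplitz L g k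
          - legendreToeplitz L (fun x => f x * g x) k) / (k : ℝ))
      atTop (nhds 0) := by
  classical
  obtain ⟨Cf, hCf⟩ := IsCompact.exists_bound_of_continuousOn isCompact_Icc hf
  obtain ⟨Cg, hCg⟩ := IsCompact.exists_bound_of_continuousOn isCompact_Icc hg
  have hCf' : ∀ x ∈ Set.Icc (-1:ℝ) 1, |f x| ≤ Cf := by
    intro x hx; simpa [Real.norm_eq_abs] using hCf x hx
  have hCg' : ∀ x ∈ Set.Icc (-1:ℝ) 1, |g x| ≤ Cg := by
    intro x hx; simpa [Real.norm_eq_abs] using hCg x hx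
  have hCf0 : 0 ≤ Cf := le_trans (abs_nonneg _) (hCf' 0 (by norm_num))
  have hCg0 : 0 ≤ Cg := le_trans (abs_nonneg _) (hCg' 0 (by norm_num))
  have sqrt_tend : Tendsto (fun k : ℕ => Real.sqrt k) atTop atTop := by
    apply Filter.tendsto_atTop_atTop.mpr
    intro C
    refine ⟨⌈(max C 0)^2⌉₊, fun k hk => ?_⟩
    have h1 : ((max C 0)^2 : ℝ) ≤ k := le_trans (Nat.le_ceil _) (by exact_mod_cast hk)
    calc C ≤ max C 0 := le_max_left _ _
      _ = Real.sqrt ((max C 0)^2) := (Real.sqrt_sq (le_max_right _ _)).symm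
      _ ≤ Real.sqrt k := Real.sqrt_le_sqrt h1
  rw [Metric.tendsto_atTop]
  intro ε hε
  set C' : ℝ := 2*Cf + 2*Cg + 2 with hC'def
  have hC' : 0 < C' := by positivity
  set δ : ℝ := min 1 (ε/(2*C')) with hδdef
  have hδpos : 0 < δ := lt_min one_pos (by positivity)
  have hδ1 : δ ≤ 1 := min_le_left _ _
  have hδε : δ * C' ≤ ε/2 := by
    calc δ * C' ≤ (ε/(2*C')) * C' :=
        mul_le_mul_of_nonneg_right (min_le_right _ _) hC'.le
      _ = ε/2 := by field_simp
  obtain ⟨Pf, hPf⟩ := exists_polynomial_near_of_continuousOn (-1) 1 f hf δ hδpos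
  obtain ⟨Pg, hPg⟩ := exists_polynomial_near_of_continuousOn (-1) 1 g hg δ hδpos
  have hPfd : ∀ x ∈ Set.Icc (-1:ℝ) 1, |f x - Pf.eval x| ≤ δ := by
    intro x hx
    rw [abs_sub_comm]
    exact (hPf x hx).le
  have hPgd : ∀ x ∈ Set.Icc (-1:ℝ) 1, |g x - Pg.eval x| ≤ δ := by
    intro x hx
    rw [abs_sub_comm]
    exact (hPg x hx).le
  have hPfb : ∀ x ∈ Set.Icc (-1:ℝ) 1, |Pf.eval x| ≤ Cf + δ := by
    intro x hx
    calc |Pf.eval x| = |f x - (f x - Pf.eval x)| := by ring_nf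
      _ ≤ |f x| + |f x - Pf.eval x| := abs_sub _ _
      _ ≤ Cf + δ := add_le_add (hCf' x hx) (hPfd x hx)
  have hPgb : ∀ x ∈ Set.Icc (-1:ℝ) 1, |Pg.eval x| ≤ Cg + δ := by
    intro x hx
    calc |Pg.eval x| = |g x - (g x - Pg.eval x)| := by ring_nf
      _ ≤ |g x| + |g x - Pg.eval x| := abs_sub _ _
      _ ≤ Cg + δ := add_le_add (hCg' x hx) (hPgd x hx)
  set K : ℝ := (Pg.natDegree : ℝ) * (Cf + δ) * (Cg + δ) with hKdef
  have hK0 : 0 ≤ K := by positivity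
  have htend : Tendsto (fun k : ℕ => K / Real.sqrt k) atTop (nhds 0) :=
    Filter.Tendsto.const_div_atTop sqrt_tend K
  obtain ⟨N₀, hN₀⟩ := (Metric.tendsto_atTop.mp htend) (ε/2) (by positivity)
  refine ⟨max N₀ 1, fun k hk => ?_⟩
  have hkN₀ : k ≥ N₀ := le_trans (le_max_left _ _) hk
  have hk1 : 1 ≤ k := le_trans (le_max_right _ _) hk
  have hkR : (0:ℝ) < k := by exact_mod_cast Nat.lt_of_lt_of_le Nat.zero_lt_one hk1
  -- continuity facts
  have cPf : ContinuousOn (fun x : ℝ => Pf.eval x) (Set.Icc (-1:ℝ) 1) :=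
    Pf.continuous.continuousOn
  have cPg : ContinuousOn (fun x : ℝ => Pg.eval x) (Set.Icc (-1:ℝ) 1) :=
    Pg.continuous.continuousOn
  have cfPf : ContinuousOn (fun x : ℝ => f x - Pf.eval x) (Set.Icc (-1:ℝ) 1) :=
    hf.sub cPf
  have cgPg : ContinuousOn (fun x : ℝ => g x - Pg.eval x) (Set.Icc (-1:ℝ) 1) :=
    hg.sub cPg
  have cPfPg : ContinuousOn (fun x : ℝ => Pf.eval x * Pg.eval x) (Set.Icc (-1:ℝ) 1) :=
    cPf.mul cPg
  have cfg : ContinuousOn (fun x : ℝ => f x * g x) (Set.Icc (-1:ℝ) 1) := hf.mul hg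
  -- matrices
  set Tf := legendreToeplitz L f k with hTf
  set Tg := legendreToeplitz L g k with hTg
  set Tfg := legendreToeplitz L (fun x => f x * g x) k with hTfg
  set TPf := legendreToeplitz L (fun x => Pf.eval x) k with hTPf
  set TPg := legendreToeplitz L (fun x => Pg.eval x) k with hTPg
  set TPfPg := legendreToeplitz L (fun x => Pf.eval x * Pg.eval x) k with hTPfPg
  have hsub1 : legendreToeplitz L (fun x => f x - Pf.eval x) k = Tf - TPf :=
    T_sub hf cPf k
  have hsub2 : legendreToeplitz L (fun x => g x - Pg.eval x) k = Tg - TPg :=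
    T_sub hg cPg k
  have hsub3 : legendreToeplitz L (fun x => Pf.eval x * Pg.eval x - f x * g x) k
      = TPfPg - Tfg := T_sub cPfPg cfg k
  have decomp : Tf * Tg - Tfg
      = (TPf * TPg - TPfPg)
        + (legendreToeplitz L (fun x => f x - Pf.eval x) k * Tg
          + (TPf * legendreToeplitz L (fun x => g x - Pg.eval x) k
            + legendreToeplitz L (fun x => Pf.eval x * Pg.eval x - f x * g x) k)) := by
    rw [hsub1, hsub2, hsub3]
    noncomm_ring
  -- norm bounds
  have n1 : ‖TPf * TPg - TPfPg‖ ≤ K :=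
    poly_case hL_deg hL_orth Pf Pg (by positivity) (by positivity) hPfb hPgb k
  have nTg : ‖Tg‖ ≤ Real.sqrt k * Cg := frob_T hL_orth hg hCg0 hCg' k
  have n2 : ‖legendreToeplitz L (fun x => f x - Pf.eval x) k * Tg‖
      ≤ δ * (Real.sqrt k * Cg) := by
    calc ‖legendreToeplitz L (fun x => f x - Pf.eval x) k * Tg‖
        ≤ δ * ‖Tg‖ := frob_mul_left hL_orth cfPf hδpos.le hPfd Tg
      _ ≤ δ * (Real.sqrt k * Cg) := mul_le_mul_of_nonneg_left nTg hδpos.le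
  have nTgPg : ‖legendreToeplitz L (fun x => g x - Pg.eval x) k‖
      ≤ Real.sqrt k * δ := frob_T hL_orth cgPg hδpos.le hPgd k
  have n3 : ‖TPf * legendreToeplitz L (fun x => g x - Pg.eval x) k‖
      ≤ (Cf + δ) * (Real.sqrt k * δ) := by
    calc ‖TPf * legendreToeplitz L (fun x => g x - Pg.eval x) k‖
        ≤ (Cf + δ) * ‖legendreToeplitz L (fun x => g x - Pg.eval x) k‖ :=
          frob_mul_left hL_orth cPf (by positivity) hPfb _
      _ ≤ (Cf + δ) * (Real.sqrt k * δ) :=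
          mul_le_mul_of_nonneg_left nTgPg (by positivity)
  have hX4b : ∀ x ∈ Set.Icc (-1:ℝ) 1,
      |Pf.eval x * Pg.eval x - f x * g x| ≤ δ * (Cg + δ) + Cf * δ := by
    intro x hx
    have e : Pf.eval x * Pg.eval x - f x * g x
        = -((f x - Pf.eval x) * Pg.eval x) + (f x * (Pg.eval x - g x)) := by ring
    rw [e]
    calc |(-((f x - Pf.eval x) * Pg.eval x)) + (f x * (Pg.eval x - g x))|
        ≤ |(-((f x - Pf.eval x) * Pg.eval x))| + |f x * (Pg.eval x - g x)| :=
          abs_add_le _ _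
      _ = |f x - Pf.eval x| * |Pg.eval x| + |f x| * |Pg.eval x - g x| := by
          rw [abs_neg, abs_mul, abs_mul]
      _ ≤ δ * (Cg + δ) + Cf * δ := by
          have h1 := hPfd x hx
          have h2 := hPgb x hx
          have h3 := hCf' x hx
          have h4 : |Pg.eval x - g x| ≤ δ := by rw [abs_sub_comm]; exact hPgd x hx
          have hA := mul_le_mul h1 h2 (abs_nonneg _) hδpos.le
          have hB := mul_le_mul h3 h4 (abs_nonneg _) hCf0
          linarith
  have n4 : ‖legendreToeplitz L (fun x => Pf.eval x * Pg.eval x - f x * g x) k‖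
      ≤ Real.sqrt k * (δ * (Cg + δ) + Cf * δ) :=
    frob_T hL_orth (cPfPg.sub cfg) (by positivity) hX4b k
  set E : ℝ := δ*Cg + (Cf+δ)*δ + (δ*(Cg+δ) + Cf*δ) with hEdef
  have hE : E ≤ δ * C' := by
    have hδsq : δ^2 ≤ δ := by nlinarith
    rw [hEdef, hC'def]
    nlinarith
  have hDnorm : ‖Tf * Tg - Tfg‖ ≤ K + Real.sqrt k * E := by
    rw [decomp]
    calc ‖(TPf * TPg - TPfPg)
        + (legendreToeplitz L (fun x => f x - Pf.eval x) k * Tg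
          + (TPf * legendreToeplitz L (fun x => g x - Pg.eval x) k
            + legendreToeplitz L (fun x => Pf.eval x * Pg.eval x - f x * g x) k))‖
        ≤ ‖TPf * TPg - TPfPg‖
          + (‖legendreToeplitz L (fun x => f x - Pf.eval x) k * Tg‖
            + (‖TPf * legendreToeplitz L (fun x => g x - Pg.eval x) k‖
              + ‖legendreToeplitz L (fun x => Pf.eval x * Pg.eval x - f x * g x) k‖)) := by
          refine (norm_add_le _ _).trans ?_
          gcongr
          refine (norm_add_le _ _).trans ?_
          gcongr
          exact norm_add_le _ _
      _ ≤ K + (δ * (Real.sqrt k * Cg) + ((Cf + δ) * (Real.sqrt k * δ)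
            + Real.sqrt k * (δ * (Cg + δ) + Cf * δ))) := by
          gcongr
      _ = K + Real.sqrt k * E := by rw [hEdef]; ring
  have hss : Real.sqrt k * Real.sqrt k = (k:ℝ) := Real.mul_self_sqrt (by positivity)
  have hsk0 : (0:ℝ) < Real.sqrt k := Real.sqrt_pos.mpr hkR
  have h1 : traceAbsReal (Tf * Tg - Tfg) ≤ Real.sqrt k * K + (k:ℝ) * E := by
    refine (traceAbs_le _).trans ?_
    calc Real.sqrt k * ‖Tf * Tg - Tfg‖
        ≤ Real.sqrt k * (K + Real.sqrt k * E) :=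
          mul_le_mul_of_nonneg_left hDnorm (Real.sqrt_nonneg _)
      _ = Real.sqrt k * K + (k:ℝ) * E := by linear_combination E * hss
  have hu0 : 0 ≤ traceAbsReal (Tf * Tg - Tfg) / k :=
    div_nonneg (traceAbs_nonneg _) hkR.le
  have e4 : (K / Real.sqrt k) * k = K * Real.sqrt k := by
    rw [div_mul_eq_mul_div, div_eq_iff hsk0.ne']
    linear_combination (-K) * hss
  have h2 : traceAbsReal (Tf * Tg - Tfg) / k ≤ K / Real.sqrt k + E := by
    rw [div_le_iff₀ hkR]
    refine h1.trans (le_of_eq ?_)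
    rw [add_mul, e4]
    ring
  have hlt1 : K / Real.sqrt k < ε/2 := by
    have := hN₀ k hkN₀
    rwa [dist_zero_right, Real.norm_eq_abs,
      abs_of_nonneg (div_nonneg hK0 (Real.sqrt_nonneg _))] at this
  have hle2 : E ≤ ε/2 := hE.trans hδε
  rw [dist_zero_right, Real.norm_eq_abs, abs_of_nonneg hu0]
  linarith

end Final

end LTProd

/-- **Product theorem for Legendre–Toeplitz matrices**: for continuous
`f, g : [−1,1] → ℝ`, `(1/k) Tr[|T_k{f}·T_k{g} − T_k{f·g}|] → 0` as `k → ∞`. -/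
theorem product_theorem_legendre_toeplitz
    (L : ℕ → Polynomial ℝ)
    (hL_deg : ∀ n, (L n).natDegree = n)
    (hL_orth : ∀ n m, (∫ x in (-1:ℝ)..1, (L n).eval x * (L m).eval x)
      = if n = m then 1 else 0)
    (f g : ℝ → ℝ)
    (hf : ContinuousOn f (Set.Icc (-1) 1)) (hg : ContinuousOn g (Set.Icc (-1) 1)) :
    Tendsto (fun k : ℕ =>
        traceAbsReal (legendreToeplitz L f k * legendreToeplitz L g k
          - legendreToeplitz L (fun x => f x * g x) k) / (k : ℝ))
      atTop (nhds 0) := by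
  exact LTProd.final L hL_deg hL_orth f g hf hg
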